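/- arXiv:1209.3419 — 4 statements merged into one kernel-verified Lean document; each statement's English description precedes it below -/
import Mathlib

section
/- If a hypergraph H is acyclic (has a join tree), then H has generalized hypertree width at most 1; conversely, if ghw(H) = 1 then H has a join tree (acyclic hypergraphs are exactly those of generalized hypertree width 1). -/
open SimpleGraph

/-- A tree decomposition of a graph `G`: a tree `T` with bags `χ` satisfying the
vertex-cover, edge-cover and connectedness conditions. -/
structure IsTreeDecomp {V ι : Type} (G : SimpleGraph V)
    (T : SimpleGraph ι) (χ : ι → Finset V) : Prop where
  isTree : T.IsTree
  vertex_cover : ∀ v : V, ∃ p : ι, v ∈ χ p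
  edge_cover : ∀ v w : V, G.Adj v w → ∃ p : ι, v ∈ χ p ∧ w ∈ χ p
  bags_connected : ∀ v : V, (T.induce {p : ι | v ∈ χ p}).Connected

/-- The treewidth of a graph: the minimum, over tree decompositions, of the
maximum bag size minus one. -/
noncomputable def treewidth {V : Type} (G : SimpleGraph V) : ℕ :=
  sInf { k | ∃ (ι : Type) (_i : Fintype ι) (T : SimpleGraph ι) (χ : ι → Finset V),
    IsTreeDecomp G T χ ∧ (@Finset.univ ι _i).sup (fun p => (χ p).card) - 1 = k }

/-- The primal graph of a hypergraph with hyperedge set `E`: two distinct nodes are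
adjacent iff they occur together in some hyperedge. -/
def primalH {V : Type} (E : Finset (Finset V)) : SimpleGraph V where
  Adj v w := v ≠ w ∧ ∃ h ∈ E, v ∈ h ∧ w ∈ h
  symm := by
    constructor
    rintro v w ⟨hne, h, hE, hv, hw⟩
    exact ⟨hne.symm, h, hE, hw, hv⟩
  loopless := by
    constructor
    rintro v ⟨hne, -⟩
    exact hne rfl

/-- A hypergraph (given by its hyperedge set `E`) has a join tree: a tree on its
hyperedges such that for every node occurring in some hyperedge, the hyperedges
containing it induce a connected subtree. -/
def HasJoinTree {V : Type} (E : Finset (Finset V)) : Prop :=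
  ∃ T : SimpleGraph {h // h ∈ E}, T.IsTree ∧
    ∀ v : V, (∃ h ∈ E, v ∈ h) →
      (T.induce {h : {h // h ∈ E} | v ∈ h.1}).Connected

/-- A generalized hypertree decomposition of the hypergraph with hyperedge set `E`:
a tree decomposition of the primal graph together with a labelling `lam` of tree
nodes by sets of hyperedges covering the bags. -/
structure IsGHD {V ι : Type} (E : Finset (Finset V))
    (T : SimpleGraph ι) (χ : ι → Finset V) (lam : ι → Finset (Finset V)) : Prop where
  td : IsTreeDecomp (primalH E) T χ
  lam_sub : ∀ p : ι, lam p ⊆ E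
  covers : ∀ p : ι, ∀ v ∈ χ p, ∃ h ∈ lam p, v ∈ h

/-- The generalized hypertree width: the minimum over generalized hypertree
decompositions of the maximum number of hyperedges used to cover a bag. -/
noncomputable def ghw {V : Type} (E : Finset (Finset V)) : ℕ :=
  sInf { k | ∃ (ι : Type) (_i : Fintype ι) (T : SimpleGraph ι) (χ : ι → Finset V)
    (lam : ι → Finset (Finset V)), IsGHD E T χ lam ∧
    (@Finset.univ ι _i).sup (fun p => (lam p).card) = k }


variable {ι : Type} {G : SimpleGraph ι}

/-- Connectivity of a set of vertices, phrased via walks staying in the set. -/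
def ConnOn (G : SimpleGraph ι) (S : Set ι) : Prop :=
  S.Nonempty ∧ ∀ a ∈ S, ∀ b ∈ S, ∃ W : G.Walk a b, ∀ x ∈ W.support, x ∈ S

/-- The inclusion homomorphism from an induced subgraph. -/
def inducedVal (G : SimpleGraph ι) (A : Set ι) : G.induce A →g G where
  toFun := Subtype.val
  map_rel' := fun h => h

lemma inducedVal_inj (A : Set ι) : Function.Injective (inducedVal G A) := Subtype.val_injective

lemma isAcyclic_induce (hG : G.IsAcyclic) (A : Set ι) : (G.induce A).IsAcyclic := by
  intro v c hc
  exact hG _ (hc.map (f := inducedVal G A) (inducedVal_inj A))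

private lemma walk_induce_down_aux {A : Set ι} :
    ∀ {a b : ι} (W : G.Walk a b) (_ : ∀ x ∈ W.support, x ∈ A) (ha : a ∈ A) (hb : b ∈ A),
      ∃ W' : (G.induce A).Walk ⟨a, ha⟩ ⟨b, hb⟩, W'.map (inducedVal G A) = W := by
  intro a b W
  induction W with
  | nil =>
    intro _ ha hb
    exact ⟨Walk.nil, rfl⟩
  | @cons a c b h W ih =>
    intro hsup ha hb
    have hc : c ∈ A := hsup c (by simp)
    obtain ⟨W', hW'⟩ := ih (fun x hx => hsup x (by simp [hx])) hc hb
    exact ⟨Walk.cons (by simpa using h) W', by simp [Walk.map_cons, hW']; rfl⟩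

lemma walk_induce_down_map {A : Set ι} {a b : ↥A} (W : G.Walk a.1 b.1)
    (hsup : ∀ x ∈ W.support, x ∈ A) :
    ∃ W' : (G.induce A).Walk a b, W'.map (inducedVal G A) = W := by
  obtain ⟨a, ha⟩ := a
  obtain ⟨b, hb⟩ := b
  exact walk_induce_down_aux W hsup ha hb

lemma walk_induce_down {A : Set ι} {a b : ↥A} (W : G.Walk a.1 b.1)
    (hsup : ∀ x ∈ W.support, x ∈ A) :
    ∃ W' : (G.induce A).Walk a b, ∀ y ∈ W'.support, y.1 ∈ W.support := by
  obtain ⟨W', hW'⟩ := walk_induce_down_map W hsup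
  refine ⟨W', fun y hy => ?_⟩
  have : y.1 ∈ (W'.map (inducedVal G A)).support := by
    rw [Walk.support_map]
    exact List.mem_map.mpr ⟨y, hy, rfl⟩
  rwa [hW'] at this

lemma walk_induce_up {A : Set ι} :
    ∀ {a b : ↥A} (W : (G.induce A).Walk a b),
      ∃ W' : G.Walk a.1 b.1, ∀ x ∈ W'.support, x ∈ A := by
  intro a b W
  induction W with
  | nil => exact ⟨Walk.nil, by simp⟩
  | @cons a c b h W ih =>
    obtain ⟨W', hW'⟩ := ih
    refine ⟨Walk.cons (by simpa using h) W', ?_⟩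
    intro x hx
    rw [Walk.support_cons] at hx
    rcases List.mem_cons.mp hx with rfl | hx'
    · exact a.2
    · exact hW' x hx'

lemma connOn_of_induce_connected {S : Set ι} (h : (G.induce S).Connected) : ConnOn G S := by
  constructor
  · obtain ⟨⟨x, hx⟩⟩ := h.nonempty
    exact ⟨x, hx⟩
  · intro a ha b hb
    obtain ⟨W⟩ := h.preconnected ⟨a, ha⟩ ⟨b, hb⟩
    exact walk_induce_up W

lemma induce_connected_of_connOn {S : Set ι} (h : ConnOn G S) : (G.induce S).Connected := by
  obtain ⟨⟨x, hx⟩, hwalk⟩ := h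
  have : Nonempty ↥S := ⟨⟨x, hx⟩⟩
  refine ⟨fun a b => ?_⟩
  obtain ⟨W, hW⟩ := hwalk a.1 a.2 b.1 b.2
  obtain ⟨W', -⟩ := walk_induce_down W hW
  exact ⟨W'⟩

/-- A path between two vertices different from `p` avoids `p`, when `p` has a
unique neighbour `q`. -/
lemma leaf_not_mem_path_support {p q : ι} (hleaf : ∀ z, G.Adj p z → z = q) :
    ∀ {a b : ι} (W : G.Walk a b), W.IsPath → a ≠ p → b ≠ p → p ∉ W.support := by
  intro a b W
  induction W with
  | nil =>
    intro _ ha _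
    simpa using fun h => (ha h.symm).elim
  | @cons a c b h W ih =>
    intro hW ha hb
    rw [Walk.support_cons, List.mem_cons]
    rintro (rfl | hmem)
    · exact ha rfl
    by_cases hc : c = p
    · subst hc
      have haq : a = q := hleaf a h.symm
      obtain ⟨d, hpd, W', rfl⟩ := Walk.exists_eq_cons_of_ne (fun h' => hb h'.symm) W
      have hdq : d = q := hleaf d hpd
      have h2 := (Walk.cons_isPath_iff _ _).mp hW
      apply h2.2
      rw [Walk.support_cons, List.mem_cons]
      right
      rw [haq, ← hdq]
      exact Walk.start_mem_support W'
    · exact (ih ((Walk.cons_isPath_iff _ _).mp hW).1 hc hb) hmem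

/-- If a connected-on set contains the leaf `p` and another vertex, it contains `q`. -/
lemma mem_of_connOn_leaf {p q : ι} (hleaf : ∀ z, G.Adj p z → z = q) {S : Set ι}
    (hC : ConnOn G S) (hp : p ∈ S) {y : ι} (hy : y ∈ S) (hyp : y ≠ p) : q ∈ S := by
  obtain ⟨W, hW⟩ := hC.2 y hy p hp
  obtain ⟨c, hpc, W', hWeq⟩ := Walk.exists_eq_cons_of_ne (Ne.symm hyp) W.reverse
  have hcq : c = q := hleaf c hpc
  have : c ∈ W.support := by
    have : c ∈ W.reverse.support := by
      rw [hWeq, Walk.support_cons]; exact List.mem_cons.mpr (Or.inr (Walk.start_mem_support W'))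
    rwa [Walk.support_reverse, List.mem_reverse] at this
  exact hcq ▸ hW c this

/-- Removing a leaf from a connected-on set keeps it connected (walks avoid the leaf). -/
lemma connOn_sdiff_leaf {p q : ι} (hleaf : ∀ z, G.Adj p z → z = q) {S : Set ι}
    (hC : ConnOn G S) {y : ι} (hy : y ∈ S) (hyp : y ≠ p) :
    ConnOn G (S \ {p}) := by
  classical
  refine ⟨⟨y, hy, hyp⟩, fun a ha b hb => ?_⟩
  obtain ⟨W, hW⟩ := hC.2 a ha.1 b hb.1
  refine ⟨W.bypass, fun x hx => ?_⟩
  have hxS : x ∈ S := hW x (Walk.support_bypass_subset W hx)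
  have hxp : x ≠ p := by
    rintro rfl
    exact leaf_not_mem_path_support hleaf W.bypass (Walk.bypass_isPath W) ha.2 hb.2 hx
  exact ⟨hxS, hxp⟩

/-- No cycle passes through a vertex with a unique neighbour. -/
lemma not_mem_cycle_support {p q : ι} (hleaf : ∀ z, G.Adj p z → z = q) {a : ι}
    {W : G.Walk a a} (hW : W.IsCycle) : p ∉ W.support := by
  classical
  intro hp
  set W' := W.rotate p hp with hW'def
  have hW' : W'.IsCycle := hW.rotate hp
  have hlen : 3 ≤ W'.length := hW'.three_le_length
  have hnil : ¬ W'.Nil := by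
    rw [Walk.not_nil_iff_lt_length]; omega
  obtain ⟨c, hpc, D, hWeq⟩ := Walk.not_nil_iff.mp hnil
  have hDlen : 2 ≤ D.length := by
    have : W'.length = D.length + 1 := by rw [hWeq]; simp
    omega
  have hqp : q ≠ p := by
    have := hleaf c hpc; subst this; exact hpc.ne'
  -- D : Walk c p with c = q
  have hcq : c = q := hleaf c hpc
  have hnil2 : ¬ D.reverse.Nil := by
    rw [Walk.not_nil_iff_lt_length, Walk.length_reverse]; omega
  obtain ⟨z, hpz, D₂, hDreq⟩ := Walk.not_nil_iff.mp hnil2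
  have hzq : z = q := hleaf z hpz
  have hD₂len : 1 ≤ D₂.length := by
    have : D.reverse.length = D₂.length + 1 := by rw [hDreq]; simp
    rw [Walk.length_reverse] at this
    omega
  have hnil3 : ¬ D₂.Nil := by rw [Walk.not_nil_iff_lt_length]; omega
  obtain ⟨y, hzy, Y, hD₂eq⟩ := Walk.not_nil_iff.mp hnil3
  -- q appears twice in D₂'s support: at the start and at the end
  have hztail : z ∈ D₂.support.tail := by
    rw [hD₂eq, Walk.support_cons]
    simpa using (hzq ▸ hcq ▸ Walk.end_mem_support Y : z ∈ Y.support)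
  -- but the tail of the cycle W' is D.support which must be nodup
  have hnodup : D.support.Nodup := by
    have := hW'.support_nodup
    rw [hWeq, Walk.support_cons] at this
    simpa using this
  have hnodup2 : (z :: D₂.support.tail).Nodup := by
    have h1 : D.reverse.support.Nodup := by
      rw [Walk.support_reverse]; exact List.nodup_reverse.mpr hnodup
    rw [hDreq, Walk.support_cons] at h1
    have h2 : D₂.support.Nodup := (List.nodup_cons.mp h1).2
    rwa [Walk.support_eq_cons D₂] at h2
  exact (List.nodup_cons.mp hnodup2).1 hztail

/-- Transfer of `ConnOn` into an induced subgraph. -/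
lemma connOn_induce_of_connOn {A S : Set ι} (hSA : S ⊆ A) (h : ConnOn G S) :
    ConnOn (G.induce A) {y : ↥A | y.1 ∈ S} := by
  obtain ⟨⟨x, hx⟩, hwalk⟩ := h
  refine ⟨⟨⟨x, hSA hx⟩, hx⟩, fun a ha b hb => ?_⟩
  obtain ⟨W, hW⟩ := hwalk a.1 ha b.1 hb
  obtain ⟨W', hW'⟩ := walk_induce_down W (fun z hz => hSA (hW z hz))
  exact ⟨W', fun y hy => hW y.1 (hW' y hy)⟩

/-- Cycles avoiding the complement of `A` descend to the induced subgraph. -/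
lemma cycle_induce_down {A : Set ι} {a : ι} (ha : a ∈ A) (W : G.Walk a a) (hW : W.IsCycle)
    (hsup : ∀ x ∈ W.support, x ∈ A) :
    ∃ W' : (G.induce A).Walk ⟨a, ha⟩ ⟨a, ha⟩, W'.IsCycle := by
  obtain ⟨W', hmap⟩ := walk_induce_down_map (a := ⟨a, ha⟩) (b := ⟨a, ha⟩) W hsup
  exact ⟨W', (Walk.map_isCycle_iff_of_injective (inducedVal_inj A)).mp (hmap ▸ hW)⟩

/-- A finite tree with at least two vertices has a leaf. -/
lemma exists_leaf [Fintype ι] (hT : G.IsTree) (h2 : 2 ≤ Fintype.card ι) :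
    ∃ p q, G.Adj p q ∧ ∀ z, G.Adj p z → z = q := by
  classical
  have hnbr : ∀ v : ι, ∃ w, G.Adj v w := by
    intro v
    obtain ⟨w, hw⟩ := Fintype.exists_ne_of_one_lt_card (by omega) v
    obtain ⟨W⟩ := hT.isConnected.preconnected v w
    cases W with
    | nil => exact absurd rfl hw
    | cons h _ => exact ⟨_, h⟩
  by_contra hcon
  push_neg at hcon
  have hdeg : ∀ v : ι, 2 ≤ G.degree v := by
    intro v
    obtain ⟨w, hw⟩ := hnbr v
    obtain ⟨z, hz, hzw⟩ := hcon v w hw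
    have h1 : 1 < (G.neighborFinset v).card :=
      Finset.one_lt_card.mpr ⟨z, (SimpleGraph.mem_neighborFinset G v z).mpr hz,
        w, (SimpleGraph.mem_neighborFinset G v w).mpr hw, hzw⟩
    exact h1
  have hsum := G.sum_degrees_eq_twice_card_edges
  have hedge := hT.card_edgeFinset
  have hle : 2 * Fintype.card ι ≤ ∑ v, G.degree v := by
    calc 2 * Fintype.card ι = ∑ _v : ι, 2 := by
          simp [Finset.sum_const, mul_comm]
      _ ≤ ∑ v, G.degree v := Finset.sum_le_sum (fun i _ => hdeg i)
  rw [hsum] at hle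
  omega

/-- Deleting a leaf from a tree yields a tree. -/
lemma isTree_delete_leaf {p q : ι} (hT : G.IsTree) (hadj : G.Adj p q)
    (hleaf : ∀ z, G.Adj p z → z = q) : (G.induce {x | x ≠ p}).IsTree := by
  classical
  constructor
  · haveI : Nonempty ↥{x : ι | x ≠ p} := ⟨⟨q, hadj.ne'⟩⟩
    refine ⟨fun a b => ?_⟩
    obtain ⟨W⟩ := hT.isConnected.preconnected a.1 b.1
    have hpath := W.bypass_isPath
    have hsup : ∀ x ∈ W.bypass.support, x ∈ {x : ι | x ≠ p} := by
      intro x hx heq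
      subst heq
      exact leaf_not_mem_path_support hleaf W.bypass hpath a.2 b.2 hx
    obtain ⟨W', -⟩ := walk_induce_down (a := a) (b := b) W.bypass hsup
    exact ⟨W'⟩
  · exact isAcyclic_induce hT.IsAcyclic _

section JoinTreeBuild
variable {V : Type}

/-- A hypergraph with a single hyperedge has a join tree. -/
lemma hasJoinTree_singleton (c : Finset V) : HasJoinTree ({c} : Finset (Finset V)) := by
  have hall : ∀ a : {h // h ∈ ({c} : Finset (Finset V))}, a = ⟨c, Finset.mem_singleton_self c⟩ :=
    fun a => Subtype.ext (Finset.mem_singleton.mp a.2)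
  refine ⟨⊥, ⟨?_, isAcyclic_bot⟩, ?_⟩
  · haveI : Nonempty {h // h ∈ ({c} : Finset (Finset V))} := ⟨⟨c, Finset.mem_singleton_self c⟩⟩
    refine ⟨fun a b => ?_⟩
    rw [hall a, hall b]
  · intro v ⟨h, hh, hv⟩
    have hvc : v ∈ c := (Finset.mem_singleton.mp hh) ▸ hv
    haveI : Nonempty ↥{h : {h // h ∈ ({c} : Finset (Finset V))} | v ∈ h.1} :=
      ⟨⟨⟨c, Finset.mem_singleton_self c⟩, hvc⟩⟩
    refine ⟨fun a b => ?_⟩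
    have : a = b := Subtype.ext (by rw [hall a.1, hall b.1])
    rw [this]

/-- Attaching an "ear" `h` to a join tree of `E.erase h` gives a join tree of `E`. -/
lemma hasJoinTree_extend [DecidableEq V] {E : Finset (Finset V)} {h c : Finset V} (hhE : h ∈ E) (hcE : c ∈ E)
    (hch : c ≠ h) (hJT : HasJoinTree (E.erase h))
    (hear : ∀ v ∈ h, (∃ g ∈ E.erase h, v ∈ g) → v ∈ c) : HasJoinTree E := by
  classical
  obtain ⟨J', hJ'tree, hJ'conn⟩ := hJT
  have hcE' : c ∈ E.erase h := Finset.mem_erase.mpr ⟨hch, hcE⟩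
  set J : SimpleGraph {g // g ∈ E} :=
    { Adj := fun a b =>
        (∃ (pa : a.1 ∈ E.erase h) (pb : b.1 ∈ E.erase h), J'.Adj ⟨a.1, pa⟩ ⟨b.1, pb⟩) ∨
        (a.1 = h ∧ b.1 = c) ∨ (a.1 = c ∧ b.1 = h)
      symm := by
        constructor
        rintro a b (⟨pa, pb, hab⟩ | ⟨h1, h2⟩ | ⟨h1, h2⟩)
        · exact Or.inl ⟨pb, pa, hab.symm⟩
        · exact Or.inr (Or.inr ⟨h2, h1⟩)
        · exact Or.inr (Or.inl ⟨h2, h1⟩)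
      loopless := by
        constructor
        rintro a (⟨pa, pb, hab⟩ | ⟨h1, h2⟩ | ⟨h1, h2⟩)
        · exact J'.loopless.irrefl _ hab
        · exact hch (h2 ▸ h1 ▸ rfl)
        · exact hch (h1 ▸ h2 ▸ rfl) } with hJdef
  have φrel : ∀ {x y : {g // g ∈ E.erase h}}, J'.Adj x y →
      J.Adj ⟨x.1, Finset.mem_of_mem_erase x.2⟩ ⟨y.1, Finset.mem_of_mem_erase y.2⟩ := by
    intro x y hxy
    exact Or.inl ⟨x.2, y.2, hxy⟩
  set φ : J' →g J :=
    { toFun := fun x => ⟨x.1, Finset.mem_of_mem_erase x.2⟩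
      map_rel' := fun hxy => φrel hxy } with hφdef
  have hvert : ∀ z, J.Adj ⟨h, hhE⟩ z → z = ⟨c, hcE⟩ := by
    rintro z (⟨pa, pb, hab⟩ | ⟨h1, h2⟩ | ⟨h1, h2⟩)
    · exact absurd pa (Finset.notMem_erase h E)
    · exact Subtype.ext h2
    · exact absurd h1.symm hch
  have hreach : ∀ a : {g // g ∈ E}, J.Reachable a ⟨c, hcE⟩ := by
    intro a
    by_cases ha : a.1 = h
    · have : a = ⟨h, hhE⟩ := Subtype.ext ha
      rw [this]
      exact (SimpleGraph.Adj.reachable (Or.inr (Or.inl ⟨rfl, rfl⟩)))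
    · have haE : a.1 ∈ E.erase h := Finset.mem_erase.mpr ⟨ha, a.2⟩
      obtain ⟨W⟩ := hJ'tree.isConnected.preconnected ⟨a.1, haE⟩ ⟨c, hcE'⟩
      exact ⟨W.map φ⟩
  have hJtree : J.IsTree := by
    constructor
    · haveI : Nonempty {g // g ∈ E} := ⟨⟨h, hhE⟩⟩
      exact ⟨fun a b => (hreach a).trans (hreach b).symm⟩
    · intro x W hW
      have hxsup : ∀ y ∈ W.support, y ∈ {z : {g // g ∈ E} | z ≠ ⟨h, hhE⟩} := by
        intro y hy heq
        exact (not_mem_cycle_support hvert hW) (heq ▸ hy)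
      obtain ⟨W', hW'⟩ := cycle_induce_down (hxsup x (Walk.start_mem_support W)) W hW hxsup
      have ψrel : ∀ {y z : ↥{z : {g // g ∈ E} | z ≠ ⟨h, hhE⟩}},
          (J.induce {z : {g // g ∈ E} | z ≠ ⟨h, hhE⟩}).Adj y z →
          J'.Adj ⟨y.1.1, Finset.mem_erase.mpr ⟨fun he => y.2 (Subtype.ext he), y.1.2⟩⟩
                 ⟨z.1.1, Finset.mem_erase.mpr ⟨fun he => z.2 (Subtype.ext he), z.1.2⟩⟩ := by
        rintro y z hyz
        rcases hyz with (⟨pa, pb, hab⟩ | ⟨h1, h2⟩ | ⟨h1, h2⟩)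
        · exact hab
        · exact absurd (Subtype.ext h1) y.2
        · exact absurd (Subtype.ext h2) z.2
      set ψ : J.induce {z : {g // g ∈ E} | z ≠ ⟨h, hhE⟩} →g J' :=
        { toFun := fun y => ⟨y.1.1, Finset.mem_erase.mpr ⟨fun he => y.2 (Subtype.ext he), y.1.2⟩⟩
          map_rel' := fun hyz => ψrel hyz } with hψdef
      have hψinj : Function.Injective ψ := by
        intro y z hyz
        apply Subtype.ext
        apply Subtype.ext
        have h1 := congrArg (Subtype.val : {g // g ∈ E.erase h} → Finset V) hyz
        exact h1
      exact hJ'tree.IsAcyclic _ (hW'.map hψinj)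
  refine ⟨J, hJtree, ?_⟩
  intro v hv
  apply induce_connected_of_connOn
  by_cases hvh : v ∈ h
  · by_cases hother : ∃ g ∈ E.erase h, v ∈ g
    · have hvc : v ∈ c := hear v hvh hother
      have hS' := connOn_of_induce_connected (hJ'conn v hother)
      -- every element of Sv reaches ⟨c, hcE⟩ within Sv
      have key : ∀ a : {g // g ∈ E}, v ∈ a.1 →
          ∃ W : J.Walk a ⟨c, hcE⟩, ∀ x ∈ W.support, v ∈ x.1 := by
        intro a hva
        by_cases ha : a.1 = h
        · have haeq : a = ⟨h, hhE⟩ := Subtype.ext ha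
          subst haeq
          refine ⟨Walk.cons (Or.inr (Or.inl ⟨rfl, rfl⟩)) Walk.nil, ?_⟩
          intro x hx
          rw [Walk.support_cons] at hx
          rcases List.mem_cons.mp hx with rfl | hx'
          · exact hva
          · rw [Walk.support_nil] at hx'
            rcases List.mem_singleton.mp hx' with rfl
            exact hvc
        · have haE : a.1 ∈ E.erase h := Finset.mem_erase.mpr ⟨ha, a.2⟩
          obtain ⟨W, hWsup⟩ := hS'.2 ⟨a.1, haE⟩ hva ⟨c, hcE'⟩ hvc
          refine ⟨W.map φ, ?_⟩
          intro x hx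
          rw [Walk.support_map] at hx
          obtain ⟨z, hz, rfl⟩ := List.mem_map.mp hx
          exact hWsup z hz
      refine ⟨⟨⟨h, hhE⟩, hvh⟩, fun a ha b hb => ?_⟩
      obtain ⟨Wa, hWa⟩ := key a ha
      obtain ⟨Wb, hWb⟩ := key b hb
      refine ⟨Wa.append Wb.reverse, fun x hx => ?_⟩
      rcases (Walk.mem_support_append_iff _ _).mp hx with hx1 | hx2
      · exact hWa x hx1
      · rw [Walk.support_reverse, List.mem_reverse] at hx2
        exact hWb x hx2
    · refine ⟨⟨⟨h, hhE⟩, hvh⟩, fun a ha b hb => ?_⟩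
      have hah : ∀ x : {g // g ∈ E}, v ∈ x.1 → x = ⟨h, hhE⟩ := by
        intro x hx
        by_contra hxne
        exact hother ⟨x.1, Finset.mem_erase.mpr ⟨fun he => hxne (Subtype.ext he), x.2⟩, hx⟩
      have hab : a = b := (hah a ha).trans (hah b hb).symm
      subst hab
      exact ⟨Walk.nil, by simpa using ha⟩
  · obtain ⟨g, hgE, hvg⟩ := hv
    have hgne : g ≠ h := fun he => hvh (he ▸ hvg)
    have hcovered : ∃ g' ∈ E.erase h, v ∈ g' := ⟨g, Finset.mem_erase.mpr ⟨hgne, hgE⟩, hvg⟩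
    have hS' := connOn_of_induce_connected (hJ'conn v hcovered)
    refine ⟨⟨⟨g, hgE⟩, hvg⟩, fun a ha b hb => ?_⟩
    have haE : a.1 ∈ E.erase h := Finset.mem_erase.mpr ⟨fun he => hvh (he ▸ ha), a.2⟩
    have hbE : b.1 ∈ E.erase h := Finset.mem_erase.mpr ⟨fun he => hvh (he ▸ hb), b.2⟩
    obtain ⟨W, hWsup⟩ := hS'.2 ⟨a.1, haE⟩ ha ⟨b.1, hbE⟩ hb
    refine ⟨W.map φ, ?_⟩
    intro x hx
    rw [Walk.support_map] at hx
    obtain ⟨z, hz, rfl⟩ := List.mem_map.mp hx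
    exact hWsup z hz

end JoinTreeBuild

section MainInduction
variable {V : Type}

/-- A width-one generalized hypertree decomposition in walk-based form. -/
def GoodDecomp (E : Finset (Finset V)) {ι : Type} (T : SimpleGraph ι)
    (χ : ι → Finset V) (e : ι → Finset V) : Prop :=
  T.IsTree ∧ (∀ p, e p ∈ E) ∧ (∀ p, χ p ⊆ e p) ∧
  (∀ v w : V, (∃ g ∈ E, v ∈ g ∧ w ∈ g) → ∃ p, v ∈ χ p ∧ w ∈ χ p) ∧
  (∀ v : V, {p | v ∈ χ p}.Nonempty → ConnOn T {p | v ∈ χ p})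

lemma main_ind [DecidableEq V] : ∀ (n : ℕ) (E : Finset (Finset V)) (ι : Type)
    (_i : Fintype ι) (T : SimpleGraph ι) (χ e : ι → Finset V),
    GoodDecomp E T χ e → E.card + Fintype.card ι ≤ n → HasJoinTree E := by
  intro n
  induction n with
  | zero =>
    intro E ι _i T χ e hG hn
    haveI : Nonempty ι := hG.1.isConnected.nonempty
    have := Fintype.card_pos (α := ι)
    omega
  | succ n ih =>
    intro E ι _i T χ e hG hn
    classical
    obtain ⟨hT, heE, hχe, hpair, hconn⟩ := hG
    haveI : Nonempty ι := hT.isConnected.nonempty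
    have hcardι : 1 ≤ Fintype.card ι := Fintype.card_pos
    have hcardE : 1 ≤ E.card := Finset.card_pos.mpr ⟨e (Classical.arbitrary ι), heE _⟩
    by_cases hcont : ∃ g ∈ E, ∃ g' ∈ E, g ≠ g' ∧ g ⊆ g'
    · -- Case 1: a contained hyperedge, remove it
      obtain ⟨g, hg, g', hg', hne, hsub⟩ := hcont
      have hG' : GoodDecomp (E.erase g) T χ (fun x => if e x = g then g' else e x) := by
        refine ⟨hT, ?_, ?_, ?_, hconn⟩
        · intro x
          by_cases hx : e x = g
          · simp only [hx, if_pos]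
            exact Finset.mem_erase.mpr ⟨fun hgg => hne hgg.symm, hg'⟩
          · simp only [hx, if_neg, ite_false]
            exact Finset.mem_erase.mpr ⟨hx, heE x⟩
        · intro x
          by_cases hx : e x = g
          · simp only [hx, if_pos]
            exact fun v hv => hsub (hx ▸ hχe x hv)
          · simpa [hx] using hχe x
        · intro v w ⟨g'', hg'', hvw⟩
          exact hpair v w ⟨g'', Finset.mem_of_mem_erase hg'', hvw⟩
      have hcard : (E.erase g).card + Fintype.card ι ≤ n := by
        rw [Finset.card_erase_of_mem hg]
        omega
      exact hasJoinTree_extend hg hg' hne.symm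
        (ih (E.erase g) ι _i T χ _ hG' hcard) (fun v hv _ => hsub hv)
    · push_neg at hcont
      have hanti : ∀ g ∈ E, ∀ g' ∈ E, g ⊆ g' → g = g' := by
        intro g hg g' hg' hsub
        by_contra hne
        exact (hcont g hg g' hg' hne) hsub
      by_cases hι2 : 2 ≤ Fintype.card ι
      · -- there is a leaf p with unique neighbour q
        obtain ⟨p, q, hadj, hleaf⟩ := exists_leaf hT hι2
        have hqp : q ≠ p := hadj.ne'
        set A : Set ι := {x | x ≠ p} with hAdef
        set T' : SimpleGraph ↥A := T.induce A with hT'def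
        have hT'tree : T'.IsTree := isTree_delete_leaf hT hadj hleaf
        haveI finA : Fintype ↥A := Subtype.fintype _
        have hcardA : Fintype.card ↥A + 1 = Fintype.card ι := by
          have h1 := Fintype.card_subtype_compl (fun x : ι => x = p)
          rw [Fintype.card_subtype_eq] at h1
          have h2 : Fintype.card ↥A = Fintype.card {x : ι // ¬ x = p} := by
            apply Fintype.card_congr
            exact Equiv.subtypeEquivRight (fun x => Iff.rfl)
          rw [h2, h1]
          omega
        have hq_in : ∀ v : V, v ∈ χ p → ∀ y, v ∈ χ y → y ≠ p → v ∈ χ q := by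
          intro v hvp y hy hyp
          exact mem_of_connOn_leaf hleaf (hconn v ⟨p, hvp⟩) hvp hy hyp
        -- lowering connectivity statements to the leaf-deleted tree
        have lower : ∀ S : Set ι, (∀ x ∈ S, x ≠ p) → ConnOn T S →
            ConnOn T' {y : ↥A | y.1 ∈ S} := by
          intro S hS hC
          exact connOn_induce_of_connOn hS hC
        by_cases hD : ∃ v, v ∈ χ p ∧ v ∉ χ q ∧ ∃ g ∈ E, v ∈ g
        · -- R2b : the leaf's bag equals its hyperedge
          obtain ⟨v₀, hv₀p, hv₀q, g₀, hg₀E, hv₀g₀⟩ := hD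
          have hOnly : ∀ x, v₀ ∈ χ x → x = p := by
            intro x hx
            by_contra hxp
            exact hv₀q (hq_in v₀ hv₀p x hx hxp)
          have hg₀χp : g₀ ⊆ χ p := by
            intro w hw
            obtain ⟨x, hvx, hwx⟩ := hpair v₀ w ⟨g₀, hg₀E, hv₀g₀, hw⟩
            exact (hOnly x hvx) ▸ hwx
          have hg₀ep : g₀ = e p := hanti g₀ hg₀E (e p) (heE p) (hg₀χp.trans (hχe p))
          have hχpep : χ p = e p :=
            Finset.Subset.antisymm (hχe p) (hg₀ep ▸ hg₀χp)
          by_cases heq : e q = e p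
          · -- R2b-i : merge the leaf's bag into q's bag and delete the leaf
            set χ' : ↥A → Finset V := fun y => if y.1 = q then χ q ∪ χ p else χ y.1 with hχ'def
            have hG' : GoodDecomp E T' χ' (fun y => e y.1) := by
              refine ⟨hT'tree, fun y => heE y.1, ?_, ?_, ?_⟩
              · intro y
                by_cases hy : y.1 = q
                · simp only [hχ'def, hy, if_pos]
                  intro v hv
                  rcases Finset.mem_union.mp hv with hv1 | hv2
                  · exact hχe q hv1
                  · exact heq ▸ hχe p hv2
                · simpa [hχ'def, hy] using hχe y.1
              · intro v w hvw
                obtain ⟨x, hvx, hwx⟩ := hpair v w hvw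
                by_cases hx : x = p
                · refine ⟨⟨q, hqp⟩, ?_, ?_⟩
                  · simp only [hχ'def, if_pos]
                    exact Finset.mem_union_right _ (hx ▸ hvx)
                  · simp only [hχ'def, if_pos]
                    exact Finset.mem_union_right _ (hx ▸ hwx)
                · refine ⟨⟨x, hx⟩, ?_, ?_⟩
                  · by_cases hxq : x = q
                    · simp only [hχ'def, hxq, if_pos]
                      exact Finset.mem_union_left _ (hxq ▸ hvx)
                    · simpa [hχ'def, hxq] using hvx
                  · by_cases hxq : x = q
                    · simp only [hχ'def, hxq, if_pos]
                      exact Finset.mem_union_left _ (hxq ▸ hwx)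
                    · simpa [hχ'def, hxq] using hwx
              · intro v hSne
                by_cases hvp : v ∈ χ p
                · -- p was in the bag-set; q takes over
                  by_cases hTvp : ∀ x, v ∈ χ x → x = p
                  · -- only p had v : the new set is {q}
                    have hset : {y : ↥A | v ∈ χ' y} = {⟨q, hqp⟩} := by
                      ext y
                      simp only [Set.mem_setOf_eq, Set.mem_singleton_iff, hχ'def]
                      constructor
                      · intro hy
                        by_cases hyq : y.1 = q
                        · exact Subtype.ext hyq
                        · rw [if_neg hyq] at hy
                          exact absurd (hTvp y.1 hy) y.2
                      · rintro rfl
                        rw [if_pos rfl]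
                        exact Finset.mem_union_right _ hvp
                    rw [hset]
                    refine ⟨⟨⟨q, hqp⟩, rfl⟩, ?_⟩
                    rintro a rfl b rfl
                    exact ⟨Walk.nil, by simp⟩
                  · push_neg at hTvp
                    obtain ⟨x, hvx, hxp⟩ := hTvp
                    have hvq : v ∈ χ q := hq_in v hvp x hvx hxp
                    have hCon := hconn v ⟨p, hvp⟩
                    have hCon' := connOn_sdiff_leaf hleaf hCon hvq hqp
                    have hlow := lower _ (fun x hx => hx.2) hCon'
                    have hset : {y : ↥A | y.1 ∈ {x : ι | v ∈ χ x} \ {p}} =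
                        {y : ↥A | v ∈ χ' y} := by
                      ext y
                      simp only [Set.mem_setOf_eq, Set.mem_diff, Set.mem_singleton_iff, hχ'def]
                      constructor
                      · intro ⟨h1, _⟩
                        by_cases hyq : y.1 = q
                        · rw [if_pos hyq]
                          exact Finset.mem_union_left _ (hyq ▸ h1)
                        · rwa [if_neg hyq]
                      · intro hy
                        by_cases hyq : y.1 = q
                        · exact ⟨hyq ▸ hvq, hyq ▸ hqp⟩
                        · rw [if_neg hyq] at hy
                          exact ⟨hy, y.2⟩
                    rwa [hset] at hlow
                · -- p not involved
                  have hset : {y : ↥A | v ∈ χ' y} = {y : ↥A | y.1 ∈ {x : ι | v ∈ χ x}} := by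
                    ext y
                    simp only [Set.mem_setOf_eq, hχ'def]
                    by_cases hyq : y.1 = q
                    · rw [if_pos hyq]
                      constructor
                      · intro hy
                        rcases Finset.mem_union.mp hy with h1 | h2
                        · exact hyq ▸ h1
                        · exact absurd h2 hvp
                      · intro hy
                        exact Finset.mem_union_left _ (hyq ▸ hy)
                    · rw [if_neg hyq]
                  rw [hset] at hSne ⊢
                  obtain ⟨y₀, hy₀⟩ := hSne
                  have hCon := hconn v ⟨y₀.1, hy₀⟩
                  exact lower _ (fun x hx heq' => hvp (heq' ▸ hx)) hCon
            have hcard : E.card + Fintype.card ↥A ≤ n := by omega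
            exact ih E ↥A finA T' χ' _ hG' hcard
          · -- R2b-ii : e p is an ear, attach it to e q
            have hepE' : ∀ g ∈ E.erase (e p), g ≠ e p := fun g hgm => (Finset.mem_erase.mp hgm).1
            have hshared : ∀ v ∈ e p, (∃ g ∈ E.erase (e p), v ∈ g) → v ∈ χ q := by
              intro v hv ⟨g, hgm, hvg⟩
              have hvχp : v ∈ χ p := hχpep ▸ hv
              have hexy : ∃ x, v ∈ χ x ∧ x ≠ p := by
                by_contra hno
                push_neg at hno
                have hgsub : g ⊆ χ p := by
                  intro w hw
                  obtain ⟨x, hvx, hwx⟩ :=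
                    hpair v w ⟨g, Finset.mem_of_mem_erase hgm, hvg, hw⟩
                  by_cases hxp : x = p
                  · exact hxp ▸ hwx
                  · exact absurd (hno x hvx) (fun h => hxp h)
                exact (hepE' g hgm)
                  (hanti g (Finset.mem_of_mem_erase hgm) (e p) (heE p)
                    (hgsub.trans (hχe p)))
              obtain ⟨x, hvx, hxp⟩ := hexy
              exact hq_in v hvχp x hvx hxp
            have hχsubq : ∀ y : ↥A, e y.1 = e p → χ y.1 ⊆ χ q := by
              intro y hy v hv
              have hvep : v ∈ e p := hy ▸ hχe y.1 hv
              have hvχp : v ∈ χ p := hχpep ▸ hvep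
              exact hq_in v hvχp y.1 hv y.2
            set e' : ↥A → Finset V := fun y => if e y.1 = e p then e q else e y.1 with he'def
            have hG' : GoodDecomp (E.erase (e p)) T' (fun y => χ y.1) e' := by
              refine ⟨hT'tree, ?_, ?_, ?_, ?_⟩
              · intro y
                by_cases hy : e y.1 = e p
                · simp only [he'def, hy, if_pos]
                  exact Finset.mem_erase.mpr ⟨heq, heE q⟩
                · simp only [he'def, hy, ite_false]
                  exact Finset.mem_erase.mpr ⟨hy, heE y.1⟩
              · intro y
                by_cases hy : e y.1 = e p
                · simp only [he'def, hy, if_pos]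
                  exact (hχsubq y hy).trans (hχe q)
                · simpa [he'def, hy] using hχe y.1
              · intro v w ⟨g, hgm, hvg, hwg⟩
                obtain ⟨x, hvx, hwx⟩ :=
                  hpair v w ⟨g, Finset.mem_of_mem_erase hgm, hvg, hwg⟩
                by_cases hxp : x = p
                · subst hxp
                  have hvq : v ∈ χ q :=
                    hshared v (hχpep ▸ hvx) ⟨g, hgm, hvg⟩
                  have hwq : w ∈ χ q :=
                    hshared w (hχpep ▸ hwx) ⟨g, hgm, hwg⟩
                  exact ⟨⟨q, hqp⟩, hvq, hwq⟩
                · exact ⟨⟨x, hxp⟩, hvx, hwx⟩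
              · intro v hSne
                obtain ⟨y₀, hy₀⟩ := hSne
                have hCon := hconn v ⟨y₀.1, hy₀⟩
                by_cases hvp : v ∈ χ p
                · have hvq : v ∈ χ q := hq_in v hvp y₀.1 hy₀ y₀.2
                  have hCon' := connOn_sdiff_leaf hleaf hCon hvq hqp
                  have hlow := lower _ (fun x hx => hx.2) hCon'
                  have hset : {y : ↥A | y.1 ∈ {x : ι | v ∈ χ x} \ {p}} =
                      {y : ↥A | v ∈ χ y.1} := by
                    ext y
                    simp only [Set.mem_setOf_eq, Set.mem_diff, Set.mem_singleton_iff]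
                    exact ⟨fun h => h.1, fun h => ⟨h, y.2⟩⟩
                  rwa [hset] at hlow
                · have hlow := lower _ (fun x hx hxe => hvp (hxe ▸ hx)) hCon
                  exact hlow
            have hcard : (E.erase (e p)).card + Fintype.card ↥A ≤ n := by
              rw [Finset.card_erase_of_mem (heE p)]
              omega
            have hJT' := ih (E.erase (e p)) ↥A finA T' _ _ hG' hcard
            exact hasJoinTree_extend (heE p) (heE q) heq hJT'
              (fun v hv hvo => hχe q (hshared v hv hvo))
        · -- R2a : the leaf's bag is inessential, delete the leaf
          push_neg at hD
          have hcov_q : ∀ v, v ∈ χ p → (∃ g ∈ E, v ∈ g) → v ∈ χ q := by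
            intro v hvp hg
            by_contra hvq
            obtain ⟨g, hgE, hvg⟩ := hg
            exact hD v hvp hvq g hgE hvg
          have hG' : GoodDecomp E T' (fun y => χ y.1) (fun y => e y.1) := by
            refine ⟨hT'tree, fun y => heE y.1, fun y => hχe y.1, ?_, ?_⟩
            · intro v w hvw
              obtain ⟨x, hvx, hwx⟩ := hpair v w hvw
              by_cases hxp : x = p
              · subst hxp
                obtain ⟨g, hgm, hvg, hwg⟩ := hvw
                exact ⟨⟨q, hqp⟩, hcov_q v hvx ⟨g, hgm, hvg⟩, hcov_q w hwx ⟨g, hgm, hwg⟩⟩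
              · exact ⟨⟨x, hxp⟩, hvx, hwx⟩
            · intro v hSne
              obtain ⟨y₀, hy₀⟩ := hSne
              have hCon := hconn v ⟨y₀.1, hy₀⟩
              by_cases hvp : v ∈ χ p
              · have hvq : v ∈ χ q := hq_in v hvp y₀.1 hy₀ y₀.2
                have hCon' := connOn_sdiff_leaf hleaf hCon hvq hqp
                have hlow := lower _ (fun x hx => hx.2) hCon'
                have hset : {y : ↥A | y.1 ∈ {x : ι | v ∈ χ x} \ {p}} =
                    {y : ↥A | v ∈ χ y.1} := by
                  ext y
                  simp only [Set.mem_setOf_eq, Set.mem_diff, Set.mem_singleton_iff]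
                  exact ⟨fun h => h.1, fun h => ⟨h, y.2⟩⟩
                rwa [hset] at hlow
              · exact lower _ (fun x hx hxe => hvp (hxe ▸ hx)) hCon
          have hcard : E.card + Fintype.card ↥A ≤ n := by omega
          exact ih E ↥A finA T' _ _ hG' hcard
      · -- single node : E is a single hyperedge
        have hι1 : Fintype.card ι = 1 := by omega
        obtain ⟨p₀, hp₀⟩ := Fintype.card_eq_one_iff.mp hι1
        have hEone : E = {e p₀} := by
          apply Finset.eq_singleton_iff_unique_mem.mpr
          refine ⟨heE p₀, ?_⟩
          intro g hg
          apply hanti g hg (e p₀) (heE p₀)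
          intro v hv
          obtain ⟨x, hvx, -⟩ := hpair v v ⟨g, hg, hv, hv⟩
          exact hχe p₀ ((hp₀ x) ▸ hvx)
        rw [hEone]
        exact hasJoinTree_singleton (e p₀)

end MainInduction

/-- Acyclic hypergraphs are exactly those of generalized hypertree
width 1: a hypergraph with a join tree has `ghw ≤ 1`, and conversely a hypergraph
with `ghw = 1` has a join tree. (All nodes are assumed to occur in some hyperedge.) -/
theorem hasJoinTree_iff_ghw_eq_one {V : Type} [Fintype V] (E : Finset (Finset V))
    (hcov : ∀ v : V, ∃ h ∈ E, v ∈ h) :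
    (HasJoinTree E → ghw E ≤ 1) ∧ (ghw E = 1 → HasJoinTree E) := by
  classical
  constructor
  · -- a join tree gives a width-one GHD
    rintro ⟨T, hTtree, hTconn⟩
    haveI : Nonempty {h // h ∈ E} := hTtree.isConnected.nonempty
    have hmem : (1 : ℕ) ∈ { k | ∃ (ι : Type) (_i : Fintype ι) (T : SimpleGraph ι)
        (χ : ι → Finset V) (lam : ι → Finset (Finset V)), IsGHD E T χ lam ∧
        (@Finset.univ ι _i).sup (fun p => (lam p).card) = k } := by
      refine ⟨{h // h ∈ E}, inferInstance, T, fun p => p.1, fun p => {p.1}, ?_, ?_⟩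
      · constructor
        · constructor
          · exact hTtree
          · intro v
            obtain ⟨h, hE, hv⟩ := hcov v
            exact ⟨⟨h, hE⟩, hv⟩
          · rintro v w ⟨hne, h, hE, hv, hw⟩
            exact ⟨⟨h, hE⟩, hv, hw⟩
          · intro v
            exact hTconn v (hcov v)
        · intro p
          simpa using p.2
        · intro p v hv
          exact ⟨p.1, Finset.mem_singleton_self _, hv⟩
      · have : ∀ p : {h // h ∈ E}, ({p.1} : Finset (Finset V)).card = 1 := fun p =>
          Finset.card_singleton _
        rw [Finset.sup_congr rfl (fun p _ => this p)]
        exact Finset.sup_const Finset.univ_nonempty 1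
    exact Nat.sInf_le hmem
  · -- a width-one GHD gives a join tree
    intro h1
    by_cases hEe : E = ∅
    · -- impossible : then the ghw would be 0
      subst hEe
      exfalso
      have hmem : (0 : ℕ) ∈ { k | ∃ (ι : Type) (_i : Fintype ι) (T : SimpleGraph ι)
          (χ : ι → Finset V) (lam : ι → Finset (Finset V)),
          IsGHD (∅ : Finset (Finset V)) T χ lam ∧
          (@Finset.univ ι _i).sup (fun p => (lam p).card) = k } := by
        refine ⟨PUnit, inferInstance, ⊥, fun _ => ∅, fun _ => ∅, ?_, ?_⟩
        · refine ⟨⟨⟨?_, isAcyclic_bot⟩, ?_, ?_, ?_⟩, ?_, ?_⟩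
          · haveI : Nonempty PUnit := ⟨PUnit.unit⟩
            refine ⟨fun a b => ?_⟩
            have hab : a = b := rfl
            rw [hab]
          · intro v
            obtain ⟨h, hh, -⟩ := hcov v
            exact absurd hh (Finset.notMem_empty _)
          · intro v w hadj
            obtain ⟨h, hh, -⟩ := hcov v
            exact absurd hh (Finset.notMem_empty _)
          · intro v
            obtain ⟨h, hh, -⟩ := hcov v
            exact absurd hh (Finset.notMem_empty _)
          · intro p
            exact Finset.empty_subset _
          · intro p v hv
            exact absurd hv (Finset.notMem_empty _)
        · rw [Finset.sup_congr rfl (fun p _ => Finset.card_empty)]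
          exact Finset.sup_const Finset.univ_nonempty 0
      have h0 := Nat.sInf_le hmem
      unfold ghw at h1
      rw [h1] at h0
      exact absurd h0 (by norm_num)
    · obtain ⟨c₀, hc₀⟩ := Finset.nonempty_iff_ne_empty.mpr hEe
      have hne : { k | ∃ (ι : Type) (_i : Fintype ι) (T : SimpleGraph ι)
          (χ : ι → Finset V) (lam : ι → Finset (Finset V)), IsGHD E T χ lam ∧
          (@Finset.univ ι _i).sup (fun p => (lam p).card) = k }.Nonempty := by
        by_contra hcon
        rw [Set.not_nonempty_iff_eq_empty] at hcon
        unfold ghw at h1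
        rw [hcon, Nat.sInf_empty] at h1
        omega
      have hmem : (1 : ℕ) ∈ { k | ∃ (ι : Type) (_i : Fintype ι) (T : SimpleGraph ι)
          (χ : ι → Finset V) (lam : ι → Finset (Finset V)), IsGHD E T χ lam ∧
          (@Finset.univ ι _i).sup (fun p => (lam p).card) = k } := by
        rw [← h1]
        unfold ghw
        exact Nat.sInf_mem hne
      obtain ⟨ι, _i, T, χ, lam, hGHD, hsup⟩ := hmem
      have hcard1 : ∀ p : ι, (lam p).card ≤ 1 := by
        intro p
        rw [← hsup]
        exact Finset.le_sup (f := fun p : ι => (lam p).card) (Finset.mem_univ p)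
      set e : ι → Finset V := fun p =>
        if hp : (lam p).Nonempty then hp.choose else c₀ with hedef
      have heE : ∀ p, e p ∈ E := by
        intro p
        by_cases hp : (lam p).Nonempty
        · simp only [hedef, dif_pos hp]
          exact hGHD.lam_sub p hp.choose_spec
        · simp only [hedef, dif_neg hp]
          exact hc₀
      have hχe : ∀ p, χ p ⊆ e p := by
        intro p v hv
        obtain ⟨h, hlam, hvh⟩ := hGHD.covers p v hv
        have hp : (lam p).Nonempty := ⟨h, hlam⟩
        have : h = hp.choose := Finset.card_le_one.mp (hcard1 p) h hlam _ hp.choose_spec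
        simp only [hedef, dif_pos hp]
        exact this ▸ hvh
      have hGD : GoodDecomp E T χ e := by
        refine ⟨hGHD.td.isTree, heE, hχe, ?_, ?_⟩
        · rintro v w ⟨g, hgE, hv, hw⟩
          by_cases hvw : v = w
          · obtain ⟨p, hp⟩ := hGHD.td.vertex_cover v
            exact ⟨p, hp, hvw ▸ hp⟩
          · exact hGHD.td.edge_cover v w ⟨hvw, g, hgE, hv, hw⟩
        · intro v _
          exact connOn_of_induce_connected (hGHD.td.bags_connected v)
      exact main_ind (E.card + Fintype.card ι) E ι _i T χ e hGD le_rfl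
end

section
/- Deciding whether an assignment exists violating at most m constraints is NP-hard even for CSP instances with acyclic constraint hypergraphs: given any CSP instance I = (Var, U, C), the instance I' = (Var, U, C ∪ {(Var, ∅)}) has an acyclic hypergraph, is unsatisfiable, and admits an assignment violating exactly one constraint if and only if I is satisfiable. -/
open SimpleGraph

/-- A CSP instance over variables `Var`, domain `U`, with constraints indexed by `ι`:
each constraint has a scope and a relation (a set of tuples, represented as total
assignments whose values matter only on the scope). -/
structure CSP (Var U ι : Type) where
  scope : ι → Finset Var
  rel : ι → Set (Var → U)

/-- `θ` is a solution: its restriction to every constraint scope belongs to the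
corresponding relation. -/
def CSP.Sol {Var U ι : Type} (P : CSP Var U ι) (θ : Var → U) : Prop :=
  ∀ c : ι, ∃ t ∈ P.rel c, ∀ x ∈ P.scope c, θ x = t x

/-- The primal graph of a CSP instance: two distinct variables are adjacent iff
they occur together in some constraint scope. -/
def CSP.primalG {Var U ι : Type} (P : CSP Var U ι) : SimpleGraph Var where
  Adj v w := v ≠ w ∧ ∃ c : ι, v ∈ P.scope c ∧ w ∈ P.scope c
  symm := by
    constructor
    rintro v w ⟨hne, c, hv, hw⟩
    exact ⟨hne.symm, c, hw, hv⟩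
  loopless := by
    constructor
    rintro v ⟨hne, -⟩
    exact hne rfl

/-- The violation degree of an assignment: the number of constraints it violates. -/
noncomputable def violation {Var U ι : Type} (P : CSP Var U ι) (θ : Var → U) : ℕ :=
  Set.ncard { c : ι | ¬ ∃ t ∈ P.rel c, ∀ x ∈ P.scope c, θ x = t x }


private def starG {α : Type} (o : α) : SimpleGraph α where
  Adj a b := a ≠ b ∧ (a = o ∨ b = o)
  symm := by constructor; rintro a b ⟨h, h'⟩; exact ⟨h.symm, h'.symm⟩
  loopless := by constructor; rintro a ⟨h, -⟩; exact h rfl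

private lemma starG_induce_connected {α : Type} (o : α) (s : Set α) (ho : o ∈ s) :
    ((starG o).induce s).Connected := by
  rw [SimpleGraph.connected_iff]
  refine ⟨?_, ⟨⟨o, ho⟩⟩⟩
  have key : ∀ a : s, ((starG o).induce s).Reachable a ⟨o, ho⟩ := by
    intro a
    by_cases h : a.1 = o
    · have : a = ⟨o, ho⟩ := Subtype.ext h
      rw [this]
    · exact SimpleGraph.Adj.reachable ⟨h, Or.inr rfl⟩
  intro a b
  exact (key a).trans (key b).symm

private lemma starG_isTree {α : Type} (o : α) : (starG o).IsTree := by
  constructor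
  · have h := starG_induce_connected o Set.univ (Set.mem_univ o)
    rw [SimpleGraph.connected_iff] at h ⊢
    refine ⟨?_, ⟨o⟩⟩
    intro a b
    obtain ⟨w⟩ := h.1 ⟨a, Set.mem_univ a⟩ ⟨b, Set.mem_univ b⟩
    exact ⟨w.map (SimpleGraph.Hom.comap Subtype.val _)⟩
  · intro v W hW
    have hlen := hW.three_le_length
    have hnd : W.support.tail.Nodup := hW.support_nodup
    cases W with
    | nil => simp at hlen
    | cons h₁ W₁ =>
      cases W₁ with
      | nil => simp at hlen
      | cons h₂ W₂ =>
        cases W₂ with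
        | nil => simp [SimpleGraph.Walk.length_cons] at hlen
        | cons h₃ W₃ =>
          simp only [SimpleGraph.Walk.support_cons, List.tail_cons, List.nodup_cons] at hnd
          obtain ⟨ha1, hor1⟩ := h₁
          obtain ⟨ha2, hor2⟩ := h₂
          obtain ⟨ha3, hor3⟩ := h₃
          rcases hor1 with hv | hA
          · have hb : _ = o := hor2.resolve_left (fun h => ha1 (hv.trans h.symm))
            exact hnd.2.1 (hb.trans hv.symm ▸ SimpleGraph.Walk.end_mem_support W₃)
          · have hc : _ = o := hor3.resolve_left (fun h => ha2 (hA.trans h.symm))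
            exact hnd.1 (List.mem_cons_of_mem _
              (hc.trans hA.symm ▸ SimpleGraph.Walk.start_mem_support W₃))

/-- The reduction showing Min-violation is NP-hard on acyclic
hypergraphs: adding to any CSP `P` the constraint `(Var, ∅)` (over all variables,
with empty relation) yields an instance `P'` whose hypergraph is acyclic, which is
unsatisfiable, and which admits an assignment violating exactly one constraint iff
`P` is satisfiable. -/
theorem min_violation_reduction {Var U ι : Type} [Fintype Var] [DecidableEq Var]
    [Fintype ι] (P : CSP Var U ι) (P' : CSP Var U (ι ⊕ Unit))
    (hscope : ∀ c : ι, P'.scope (Sum.inl c) = P.scope c)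
    (hrel : ∀ c : ι, P'.rel (Sum.inl c) = P.rel c)
    (hbig_scope : P'.scope (Sum.inr ()) = Finset.univ)
    (hbig_rel : P'.rel (Sum.inr ()) = ∅) :
    HasJoinTree (Finset.univ.image P'.scope) ∧
    (¬ ∃ θ : Var → U, P'.Sol θ) ∧
    ((∃ θ : Var → U, violation P' θ = 1) ↔ ∃ θ : Var → U, P.Sol θ) := by
  have hU : (Finset.univ : Finset Var) ∈ Finset.univ.image P'.scope :=
    Finset.mem_image.mpr ⟨Sum.inr (), Finset.mem_univ _, hbig_scope⟩
  let o : {h // h ∈ Finset.univ.image P'.scope} := ⟨Finset.univ, hU⟩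
  refine ⟨⟨starG o, starG_isTree o, fun v _ => ?_⟩, ?_, ?_, ?_⟩
  · exact starG_induce_connected o _ (Finset.mem_univ v)
  · rintro ⟨θ, hθ⟩
    obtain ⟨t, ht, -⟩ := hθ (Sum.inr ())
    rw [hbig_rel] at ht
    exact ht
  · rintro ⟨θ, hθ⟩
    obtain ⟨a, ha⟩ := Set.ncard_eq_one.mp hθ
    have hmem : Sum.inr () ∈
        {c : ι ⊕ Unit | ¬ ∃ t ∈ P'.rel c, ∀ x ∈ P'.scope c, θ x = t x} := by
      simp [hbig_rel]
    rw [ha, Set.mem_singleton_iff] at hmem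
    refine ⟨θ, fun c => ?_⟩
    by_contra hc
    have h2 : Sum.inl c ∈ ({a} : Set (ι ⊕ Unit)) := by
      rw [← ha]
      simp only [Set.mem_setOf_eq, hrel, hscope]
      exact hc
    rw [Set.mem_singleton_iff] at h2
    exact absurd (h2.trans hmem.symm) (by simp)
  · rintro ⟨θ, hθ⟩
    refine ⟨θ, ?_⟩
    show Set.ncard _ = 1
    have hset : {c : ι ⊕ Unit | ¬ ∃ t ∈ P'.rel c, ∀ x ∈ P'.scope c, θ x = t x}
        = {Sum.inr ()} := by
      ext c
      cases c with
      | inl c =>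
        simp only [Set.mem_setOf_eq, Set.mem_singleton_iff, hrel, hscope]
        constructor
        · intro h
          exact absurd (hθ c) h
        · intro h
          exact absurd h (by simp)
      | inr u =>
        cases u
        simp [hbig_rel]
    rw [hset, Set.ncard_singleton]
end

section
/- Let P be a Max-CSP instance and (T,χ) a tree decomposition of the incidence graph of H(P). In the transformation to the CSOP instance (P', w') — where scope-variables S_i take value u_t for a tuple t ∈ r_i conforming with the assignment of the ordinary variables in the bag, or the value 'unsat' if no such tuple exists, and w' assigns cost 1 to 'unsat' values and 0 otherwise — the minimum cost of a solution of P' equals the minimum violation degree min_θ δ(θ) over all assignments θ of P. -/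
open SimpleGraph

/-- The incidence graph of a CSP instance: the bipartite graph on variables and
constraints, with `x` adjacent to `c` iff `x` occurs in the scope of `c`. -/
def CSP.incidenceG {Var U ι : Type} (P : CSP Var U ι) : SimpleGraph (Var ⊕ ι) where
  Adj a b :=
    (∃ x c, a = Sum.inl x ∧ b = Sum.inr c ∧ x ∈ P.scope c) ∨
    (∃ x c, a = Sum.inr c ∧ b = Sum.inl x ∧ x ∈ P.scope c)
  symm := by
    constructor
    rintro a b (⟨x, c, rfl, rfl, hm⟩ | ⟨x, c, rfl, rfl, hm⟩)
    · exact Or.inr ⟨x, c, rfl, rfl, hm⟩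
    · exact Or.inl ⟨x, c, rfl, rfl, hm⟩
  loopless := by
    constructor
    rintro a (⟨x, c, rfl, hab, -⟩ | ⟨x, c, rfl, hab, -⟩) <;> simp at hab

/-- The unit cost of a value of the transformed CSOP instance: the value `unsat`
(encoded `Sum.inr none`) costs 1, every other value costs 0. -/
def unsatCost {U T : Type} : U ⊕ Option T → ℕ
  | Sum.inr none => 1
  | _ => 0

/-- Solutions of the CSOP instance obtained from a Max-CSP `P` via a tree
decomposition `(T,χ)` of its incidence graph: in every bag, ordinary variables
take values in `U`, and each scope-variable `S_c` in the bag takes either the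
encoding `u_t` of a tuple `t ∈ r_c` conforming with the ordinary variables of the
bag, or the value `unsat`. -/
def IncSolPred {Var U ι ιT : Type} (P : CSP Var U ι) (χ : ιT → Finset (Var ⊕ ι))
    (θ' : Var ⊕ ι → U ⊕ Option (Var → U)) : Prop :=
  ∀ p : ιT,
    (∀ x : Var, Sum.inl x ∈ χ p → ∃ u : U, θ' (Sum.inl x) = Sum.inl u) ∧
    (∀ c : ι, Sum.inr c ∈ χ p →
      (θ' (Sum.inr c) = Sum.inr none ∨
        ∃ t ∈ P.rel c, θ' (Sum.inr c) = Sum.inr (some t) ∧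
          ∀ x ∈ P.scope c, Sum.inl x ∈ χ p → θ' (Sum.inl x) = Sum.inl (t x)))

/-- For a Max-CSP instance `P` and a tree decomposition `(T,χ)` of
the incidence graph of its hypergraph, the minimum cost of a solution of the
transformed CSOP instance `P'` (cost 1 for each `unsat` value) equals the minimum
violation degree over all assignments of `P`. -/
theorem maxcsp_incidence_min_cost {Var U ι ιT : Type} [Fintype Var] [Fintype ι]
    (P : CSP Var U ι) (T : SimpleGraph ιT) (χ : ιT → Finset (Var ⊕ ι))
    (hTD : IsTreeDecomp P.incidenceG T χ) :
    sInf { n : ℕ | ∃ θ' : Var ⊕ ι → U ⊕ Option (Var → U),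
        IncSolPred P χ θ' ∧ (∑ X : Var ⊕ ι, unsatCost (θ' X)) = n }
      = sInf { n : ℕ | ∃ θ : Var → U, violation P θ = n } := by

  classical
  set A := { n : ℕ | ∃ θ' : Var ⊕ ι → U ⊕ Option (Var → U),
        IncSolPred P χ θ' ∧ (∑ X : Var ⊕ ι, unsatCost (θ' X)) = n } with hA
  set B := { n : ℕ | ∃ θ : Var → U, violation P θ = n } with hB
  -- Direction 1: from θ build θ' with equal cost, so B ⊆ A
  have hBA : B ⊆ A := by
    rintro n ⟨θ, rfl⟩
    set sat := fun c : ι => ∃ t ∈ P.rel c, ∀ x ∈ P.scope c, θ x = t x with hsat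
    refine ⟨fun X => match X with
      | Sum.inl x => Sum.inl (θ x)
      | Sum.inr c => if h : sat c then Sum.inr (some h.choose) else Sum.inr none,
      ?_, ?_⟩
    · intro p
      constructor
      · intro x _; exact ⟨θ x, rfl⟩
      · intro c _
        by_cases h : sat c
        · refine Or.inr ⟨h.choose, h.choose_spec.1, by simp [h], ?_⟩
          intro x hx _
          simp [h.choose_spec.2 x hx]
        · left; simp [h]
    · rw [Fintype.sum_sum_type]
      have h1 : (∑ x : Var, unsatCost
          ((fun X => match X with
            | Sum.inl x => Sum.inl (θ x)
            | Sum.inr c => if h : sat c then Sum.inr (some h.choose) else Sum.inr none)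
            (Sum.inl x) : U ⊕ Option (Var → U))) = 0 := by
        simp [unsatCost]
      rw [h1, zero_add]
      have h2 : ∀ c : ι, unsatCost
          ((fun X => match X with
            | Sum.inl x => Sum.inl (θ x)
            | Sum.inr c => if h : sat c then Sum.inr (some h.choose) else Sum.inr none)
            (Sum.inr c) : U ⊕ Option (Var → U)) = if sat c then 0 else 1 := by
        intro c
        by_cases h : sat c <;> simp [h, unsatCost]
      rw [Finset.sum_congr rfl (fun c _ => h2 c)]
      rw [violation, Set.ncard_eq_toFinset_card']
      rw [Finset.sum_ite, Finset.sum_const, Finset.sum_const]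
      simp only [smul_eq_mul, mul_zero, mul_one, zero_add]
      congr 1
      ext c
      simp [sat]
  -- Direction 2: from θ' build θ with violation ≤ cost
  have key2 : ∀ n ∈ A, ∃ m ∈ B, m ≤ n := by
    rintro n ⟨θ', hsol, rfl⟩
    have hx : ∀ x : Var, ∃ u : U, θ' (Sum.inl x) = Sum.inl u := by
      intro x
      obtain ⟨p, hp⟩ := hTD.vertex_cover (Sum.inl x)
      exact (hsol p).1 x hp
    set θ : Var → U := fun x => (hx x).choose with hθ
    have hθx : ∀ x, θ' (Sum.inl x) = Sum.inl (θ x) := fun x => (hx x).choose_spec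
    refine ⟨violation P θ, ⟨θ, rfl⟩, ?_⟩
    -- each violated constraint has value unsat
    have hviol : ∀ c : ι, θ' (Sum.inr c) ≠ Sum.inr none →
        ∃ t ∈ P.rel c, ∀ x ∈ P.scope c, θ x = t x := by
      intro c hc
      obtain ⟨p, hp⟩ := hTD.vertex_cover (Sum.inr c)
      rcases (hsol p).2 c hp with h | ⟨t, htrel, hteq, -⟩
      · exact absurd h hc
      refine ⟨t, htrel, ?_⟩
      intro x hxc
      obtain ⟨q, hq1, hq2⟩ := hTD.edge_cover (Sum.inl x) (Sum.inr c)
        (Or.inl ⟨x, c, rfl, rfl, hxc⟩)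
      rcases (hsol q).2 c hq2 with h | ⟨t', _, hteq', hconf⟩
      · exact absurd h hc
      have ht' : t' = t := by
        rw [hteq] at hteq'
        simpa using hteq'.symm
      have := hconf x hxc hq1
      rw [ht', hθx x] at this
      exact Sum.inl.injEq _ _ ▸ (by injection this)
    rw [Fintype.sum_sum_type]
    calc violation P θ
        = ∑ c : ι, (if (∃ t ∈ P.rel c, ∀ x ∈ P.scope c, θ x = t x) then 0 else 1) := by
          rw [violation, Set.ncard_eq_toFinset_card']
          rw [Finset.sum_ite, Finset.sum_const, Finset.sum_const]
          simp only [smul_eq_mul, mul_zero, mul_one, zero_add]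
          congr 1
          ext c
          simp
      _ ≤ ∑ c : ι, unsatCost (θ' (Sum.inr c)) := by
          apply Finset.sum_le_sum
          intro c _
          by_cases h : ∃ t ∈ P.rel c, ∀ x ∈ P.scope c, θ x = t x
          · simp [h]
          · have : θ' (Sum.inr c) = Sum.inr none := by
              by_contra hne
              exact h (hviol c hne)
            simp [h, this, unsatCost]
      _ ≤ _ := Nat.le_add_left _ _
  -- conclude
  apply le_antisymm
  · by_cases hBne : B.Nonempty
    · exact Nat.sInf_le (hBA (Nat.sInf_mem hBne))
    · have hAe : A = ∅ := by
        rw [Set.eq_empty_iff_forall_notMem]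
        intro n hn
        obtain ⟨m, hm, -⟩ := key2 n hn
        exact hBne ⟨m, hm⟩
      rw [hAe, Set.not_nonempty_iff_eq_empty.mp hBne]
  · by_cases hAne : A.Nonempty
    · obtain ⟨m, hm, hle⟩ := key2 _ (Nat.sInf_mem hAne)
      exact le_trans (Nat.sInf_le hm) hle
    · have hBe : B = ∅ := by
        rw [Set.eq_empty_iff_forall_notMem]
        intro n hn
        exact hAne ⟨n, hBA hn⟩
      rw [hBe, Set.not_nonempty_iff_eq_empty.mp hAne]
end

section
/- If the hypergraph of a CSP instance P is acyclic with join tree T, and after performing the bottom-up semijoin pass along T (removing from each parent relation the tuples not conforming with any tuple of each child relation) the relation at the root of T is nonempty, then P has a solution. Conversely, if P has a solution, the root relation after the bottom-up pass is nonempty. -/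
open SimpleGraph

/-- `c` is a child of `v` in the tree `T` rooted at `ρ`: they are adjacent and `v`
lies on every path from the root `ρ` to `c`. -/
def IsChild {ι : Type} (T : SimpleGraph ι) (ρ v c : ι) : Prop :=
  T.Adj v c ∧ ∀ w : T.Walk ρ c, w.IsPath → v ∈ w.support

section Aux
variable {V : Type} [DecidableEq V] {G : SimpleGraph V}

noncomputable def treePath (hT : G.IsTree) (u v : V) : G.Walk u v :=
  (hT.existsUnique_path u v).choose

lemma treePath_isPath (hT : G.IsTree) (u v : V) : (treePath hT u v).IsPath :=
  (hT.existsUnique_path u v).choose_spec.1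

lemma treePath_unique (hT : G.IsTree) {u v : V} (p : G.Walk u v) (hp : p.IsPath) :
    p = treePath hT u v :=
  (hT.existsUnique_path u v).choose_spec.2 p hp

noncomputable def tpar (hT : G.IsTree) (ρ c : V) : V :=
  (treePath hT ρ c).reverse.getVert 1

lemma isPath_concat' {u v w : V} {p : G.Walk u v} (hp : p.IsPath) (h : G.Adj v w)
    (hw : w ∉ p.support) : (p.concat h).IsPath := by
  rw [← Walk.isPath_reverse_iff, Walk.reverse_concat]
  exact hp.reverse.cons (by simpa [Walk.support_reverse] using hw)

lemma treePath_length_pos (hT : G.IsTree) {ρ c : V} (h : c ≠ ρ) :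
    0 < (treePath hT ρ c).length := by
  rcases Nat.eq_zero_or_pos (treePath hT ρ c).length with h0 | h1
  · exact absurd (Walk.eq_of_length_eq_zero h0).symm h
  · exact h1

lemma adj_tpar (hT : G.IsTree) {ρ c : V} (h : c ≠ ρ) : G.Adj c (tpar hT ρ c) := by
  have hl : 0 < (treePath hT ρ c).reverse.length := by
    rw [Walk.length_reverse]; exact treePath_length_pos hT h
  have h2 := (treePath hT ρ c).reverse.adj_getVert_succ hl
  simpa [Walk.getVert_zero, tpar] using h2

lemma tpar_mem_support (hT : G.IsTree) {ρ c : V} (h : c ≠ ρ) :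
    tpar hT ρ c ∈ (treePath hT ρ c).support := by
  have h2 : tpar hT ρ c ∈ (treePath hT ρ c).reverse.support := by
    rw [Walk.mem_support_iff_exists_getVert]
    exact ⟨1, rfl, by rw [Walk.length_reverse]; exact treePath_length_pos hT h⟩
  simpa [Walk.support_reverse] using h2

lemma eq_tpar_of_adj_of_mem (hT : G.IsTree) {ρ v c : V} (hadj : G.Adj v c)
    (hv : v ∈ (treePath hT ρ c).support) : v = tpar hT ρ c := by
  set p := treePath hT ρ c with hp
  have hpath : p.IsPath := treePath_isPath hT ρ c
  have hq : (p.takeUntil v hv).IsPath := hpath.takeUntil hv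
  have hcq : c ∉ (p.takeUntil v hv).support := by
    have hnod : p.support.Nodup := hpath.support_nodup
    have hsupp : p.support = (p.takeUntil v hv).support ++ (p.dropUntil v hv).support.tail := by
      conv_lhs => rw [← p.take_spec hv]
      rw [Walk.support_append]
    rw [hsupp] at hnod
    have hct : c ∈ (p.dropUntil v hv).support.tail := by
      have hce : c ∈ (p.dropUntil v hv).support := Walk.end_mem_support _
      rw [Walk.support_eq_cons] at hce
      rcases List.mem_cons.mp hce with hce | hce
      · exact absurd hce.symm hadj.ne
      · exact hce
    exact fun hcq => (List.disjoint_of_nodup_append hnod) hcq hct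
  have hr : ((p.takeUntil v hv).concat hadj).IsPath := isPath_concat' hq hadj hcq
  have hrp : (p.takeUntil v hv).concat hadj = p := treePath_unique hT _ hr
  have hrev := congrArg Walk.reverse hrp
  rw [Walk.reverse_concat] at hrev
  show v = p.reverse.getVert 1
  rw [← hrev]
  simp [Walk.getVert_cons_succ, Walk.getVert_zero]

lemma isChild_tpar (hT : G.IsTree) {ρ c : V} (h : c ≠ ρ) : IsChild G ρ (tpar hT ρ c) c := by
  refine ⟨(adj_tpar hT h).symm, fun w hw => ?_⟩
  rw [treePath_unique hT w hw]
  exact tpar_mem_support hT h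

lemma IsChild.eq_tpar {ρ v c : V} (hT : G.IsTree) (h : IsChild G ρ v c) : v = tpar hT ρ c :=
  eq_tpar_of_adj_of_mem hT h.1 (h.2 _ (treePath_isPath hT ρ c))

lemma IsChild.ne_root {ρ v c : V} (h : IsChild G ρ v c) : c ≠ ρ := by
  rintro rfl
  have hv := h.2 Walk.nil Walk.IsPath.nil
  simp [Walk.support_nil] at hv
  exact G.loopless.irrefl _ (hv ▸ h.1)

lemma tpar_depth_lt (hT : G.IsTree) {ρ c : V} (h : c ≠ ρ) :
    (treePath hT ρ (tpar hT ρ c)).length < (treePath hT ρ c).length := by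
  have hv := tpar_mem_support hT h
  have hq : ((treePath hT ρ c).takeUntil _ hv).IsPath := (treePath_isPath hT ρ c).takeUntil hv
  have he : (treePath hT ρ c).takeUntil _ hv = treePath hT ρ (tpar hT ρ c) :=
    treePath_unique hT _ hq
  have he' : (treePath hT ρ (tpar hT ρ c)).length = ((treePath hT ρ c).takeUntil _ hv).length :=
    congrArg Walk.length he.symm
  have hlen : ((treePath hT ρ c).takeUntil _ hv).length
      + ((treePath hT ρ c).dropUntil _ hv).length = (treePath hT ρ c).length := by
    have := congrArg Walk.length ((treePath hT ρ c).take_spec hv)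
    rwa [Walk.length_append] at this
  have hd0 : ((treePath hT ρ c).dropUntil _ hv).length ≠ 0 := fun h0 =>
    (adj_tpar hT h).ne (Walk.eq_of_length_eq_zero h0).symm
  omega

lemma isChild_depth_lt (hT : G.IsTree) {ρ v c : V} (h : IsChild G ρ v c) :
    (treePath hT ρ v).length < (treePath hT ρ c).length := by
  obtain rfl := h.eq_tpar hT
  exact tpar_depth_lt hT h.ne_root

lemma adj_child_or (hT : G.IsTree) (ρ : V) {a b : V} (hadj : G.Adj a b) :
    IsChild G ρ a b ∨ IsChild G ρ b a := by
  by_cases hmem : a ∈ (treePath hT ρ b).support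
  · exact Or.inl ⟨hadj, fun w hw => by rw [treePath_unique hT w hw]; exact hmem⟩
  · right
    have hr : ((treePath hT ρ b).concat hadj.symm).IsPath :=
      isPath_concat' (treePath_isPath hT ρ b) hadj.symm hmem
    refine ⟨hadj.symm, fun w hw => ?_⟩
    rw [treePath_unique hT w hw, ← treePath_unique hT _ hr]
    simp only [Walk.support_concat, List.concat_eq_append, List.mem_append]
    exact Or.inl (Walk.end_mem_support _)

lemma wf_child (hT : G.IsTree) (ρ : V) :
    WellFounded (fun y x : V => IsChild G ρ y x) := by
  have h : Subrelation (fun y x : V => IsChild G ρ y x)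
      (InvImage (· < ·) (fun v => (treePath hT ρ v).length)) :=
    fun hc => isChild_depth_lt hT hc
  exact h.wf (InvImage.wf _ (Nat.lt_wfRel).wf)

lemma wf_parent [Fintype V] (hT : G.IsTree) (ρ : V) :
    WellFounded (fun y x : V => IsChild G ρ x y) := by
  have h : Subrelation (fun y x : V => IsChild G ρ x y)
      (InvImage (· < ·) (fun v => Fintype.card V - (treePath hT ρ v).length)) := by
    intro y x hc
    have h1 : (treePath hT ρ x).length < (treePath hT ρ y).length := isChild_depth_lt hT hc
    have h2 : (treePath hT ρ y).length < Fintype.card V := (treePath_isPath hT ρ y).length_lt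
    simp only [InvImage]
    omega
  exact h.wf (InvImage.wf _ (Nat.lt_wfRel).wf)

lemma tree_rec {α : Type} (hT : G.IsTree) (ρ : V)
    (S : V → α → Prop) (E : V → V → α → α → Prop) (a₀ : α) (h₀ : S ρ a₀)
    (hstep : ∀ v c, IsChild G ρ v c → ∀ a, S v a → ∃ b, S c b ∧ E v c a b) :
    ∃ t : V → α, (∀ v, S v (t v)) ∧ ∀ v c, IsChild G ρ v c → E v c (t v) (t c) := by
  classical
  have wf := wf_child hT ρ
  let F : ∀ v : V, (∀ y, IsChild G ρ y v → {a : α // S y a}) → {a : α // S v a} := fun v IH =>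
    if h : v = ρ then ⟨a₀, by rw [h]; exact h₀⟩
    else
      have hc := isChild_tpar hT h
      have hE := hstep _ _ hc (IH _ hc).1 (IH _ hc).2
      ⟨hE.choose, hE.choose_spec.1⟩
  refine ⟨fun v => (wf.fix F v).1, fun v => (wf.fix F v).2, ?_⟩
  intro v c hc
  have hcρ : c ≠ ρ := hc.ne_root
  obtain rfl : v = tpar hT ρ c := hc.eq_tpar hT
  have hfix := wf.fix_eq F c
  show E (tpar hT ρ c) c (wf.fix F (tpar hT ρ c)).1 (wf.fix F c).1
  rw [show (wf.fix F c).1 = (F c (fun y _ => wf.fix F y)).1 from congrArg Subtype.val hfix]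
  simp only [F, dif_neg hcρ]
  exact (hstep _ _ (isChild_tpar hT hcρ) (wf.fix F (tpar hT ρ c)).1
    (wf.fix F (tpar hT ρ c)).2).choose_spec.2

end Aux


/-- Correctness of the bottom-up semijoin pass on a join tree of an
acyclic CSP instance. `R` is the family of reduced relations: `R v` keeps exactly
the tuples of `r_v` conforming with some surviving tuple of each child relation.
Then the reduced relation at the root `ρ` is nonempty iff `P` has a solution. -/
theorem bottomUp_semijoin_correct {Var U ι : Type} [Fintype Var] [DecidableEq Var]
    [Fintype ι] (P : CSP Var U ι)
    (T : SimpleGraph ι) (hT : T.IsTree)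
    (hJT : ∀ x : Var, (∃ c : ι, x ∈ P.scope c) →
      (T.induce {c : ι | x ∈ P.scope c}).Connected)
    (ρ : ι) (R : ι → Set (Var → U))
    (hR : ∀ v : ι, R v = { t | t ∈ P.rel v ∧ ∀ c : ι, IsChild T ρ v c →
        ∃ t' ∈ R c, ∀ x ∈ P.scope v ∩ P.scope c, t x = t' x }) :
    (R ρ).Nonempty ↔ ∃ θ : Var → U, P.Sol θ := by
  classical
  constructor
  · rintro ⟨t₀, ht₀⟩
    obtain ⟨t, htR, hagree⟩ := tree_rec hT ρ (fun v f => f ∈ R v)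
      (fun v c f g => ∀ x ∈ P.scope v ∩ P.scope c, f x = g x) t₀ ht₀
      (by
        intro v c hc f hf
        rw [hR v] at hf
        obtain ⟨g, hg, hag⟩ := hf.2 c hc
        exact ⟨g, hg, hag⟩)
    have hwalk : ∀ x : Var, ∀ (a b : {d : ι // d ∈ {c : ι | x ∈ P.scope c}}),
        (T.induce {c : ι | x ∈ P.scope c}).Walk a b → t a.1 x = t b.1 x := by
      intro x a b w
      induction w with
      | nil => rfl
      | @cons a u b h q ih =>
        have hadj : T.Adj a.1 u.1 := h
        have hx : x ∈ P.scope a.1 ∩ P.scope u.1 :=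
          Finset.mem_inter.mpr ⟨a.2, u.2⟩
        have hstep : t a.1 x = t u.1 x := by
          rcases adj_child_or hT ρ hadj with hc | hc
          · exact hagree _ _ hc x hx
          · exact (hagree _ _ hc x (Finset.mem_inter.mpr ⟨u.2, a.2⟩)).symm
        exact hstep.trans ih
    refine ⟨fun x => if h : ∃ c, x ∈ P.scope c then t h.choose x else t₀ x, ?_⟩
    intro c
    refine ⟨t c, by have h := htR c; rw [hR c] at h; exact h.1, ?_⟩
    intro x hx
    have hex : ∃ d, x ∈ P.scope d := ⟨c, hx⟩
    have : (fun x => if h : ∃ c, x ∈ P.scope c then t h.choose x else t₀ x) x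
        = t hex.choose x := dif_pos hex
    rw [this]
    obtain ⟨w⟩ := (hJT x hex).preconnected ⟨hex.choose, hex.choose_spec⟩ ⟨c, hx⟩
    exact hwalk x _ _ w
  · rintro ⟨θ, hθ⟩
    have key : ∀ v : ι, ∃ t ∈ R v, ∀ x ∈ P.scope v, θ x = t x := by
      intro v
      refine (wf_parent hT ρ).induction
        (C := fun v => ∃ t ∈ R v, ∀ x ∈ P.scope v, θ x = t x) v ?_
      intro v IH
      obtain ⟨t, ht, hag⟩ := hθ v
      refine ⟨t, ?_, hag⟩
      rw [hR v]
      refine ⟨ht, fun c hc => ?_⟩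
      obtain ⟨t', ht', hag'⟩ := IH c hc
      refine ⟨t', ht', fun x hx => ?_⟩
      rw [Finset.mem_inter] at hx
      rw [← hag x hx.1, hag' x hx.2]
    obtain ⟨t, ht, -⟩ := key ρ
    exact ⟨t, ht⟩
end
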